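/- For any prime p, any s ≥ 1, and any integer r with 1 ≤ r ≤ p^s − 1 and p ∤ r, the congruence C(p^s, r) · r ≡ (−1)^(r−1) · p^s (mod p^(s+1)) holds. -/

import Mathlib

lemma aux_choose (p s : ℕ) (hp : p.Prime) (hs : 1 ≤ s) :
    ∀ k, k ≤ p ^ s - 1 → ((Nat.choose (p ^ s - 1) k : ZMod p) = (-1) ^ k) := by
  haveI := Fact.mk hp
  have hpos : 1 ≤ p ^ s := Nat.one_le_pow _ _ hp.pos
  intro k
  induction k with
  | zero => simp
  | succ k ih =>
    intro hk
    have hk' : k ≤ p ^ s - 1 := Nat.le_of_succ_le hk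
    have hne : k + 1 ≠ p ^ s := by omega
    have hdvd : p ∣ (p ^ s).choose (k + 1) :=
      hp.dvd_choose_pow (Nat.succ_ne_zero k) hne
    have h0 : ((p ^ s).choose (k + 1) : ZMod p) = 0 :=
      (ZMod.natCast_eq_zero_iff _ _).mpr hdvd
    have hsplit : (p ^ s).choose (k + 1)
        = (p ^ s - 1).choose k + (p ^ s - 1).choose (k + 1) := by
      conv_lhs => rw [show p ^ s = (p ^ s - 1) + 1 from by omega]
      rw [Nat.choose_succ_succ']
    have := h0
    rw [hsplit] at this
    push_cast at this
    rw [ih hk'] at this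
    have : ((p ^ s - 1).choose (k + 1) : ZMod p) = -(-1) ^ k := by linear_combination this
    rw [this]; ring

theorem stmt2 (p s r : ℕ) (hp : p.Prime) (hs : 1 ≤ s)
    (hr1 : 1 ≤ r) (hr2 : r ≤ p ^ s - 1) (hpr : ¬ p ∣ r) :
    (((p ^ s).choose r : ℤ)) * r ≡ (-1) ^ (r - 1) * (p : ℤ) ^ s
      [ZMOD ((p : ℤ) ^ (s + 1))] := by
  haveI := Fact.mk hp
  have hpos : 1 ≤ p ^ s := Nat.one_le_pow _ _ hp.pos
  -- key identity: p^s * C(p^s - 1, r - 1) = C(p^s, r) * r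
  have hid : (p : ℤ) ^ s * ((p ^ s - 1).choose (r - 1) : ℤ)
      = ((p ^ s).choose r : ℤ) * r := by
    have := Nat.add_one_mul_choose_eq (p ^ s - 1) (r - 1)
    have h1 : p ^ s - 1 + 1 = p ^ s := by omega
    have h2 : r - 1 + 1 = r := by omega
    rw [h1, h2] at this
    exact_mod_cast congrArg (Nat.cast : ℕ → ℤ) this
  -- congruence mod p
  have hz : ((p ^ s - 1).choose (r - 1) : ZMod p) = (-1) ^ (r - 1) :=
    aux_choose p s hp hs (r - 1) (by omega)
  have hz' : (((p ^ s - 1).choose (r - 1) : ℤ) : ZMod p) = (((-1 : ℤ) ^ (r - 1) : ℤ) : ZMod p) := by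
    push_cast
    exact hz
  have hmod : ((p ^ s - 1).choose (r - 1) : ℤ) ≡ (-1) ^ (r - 1) [ZMOD ((p : ℕ) : ℤ)] :=
    (ZMod.intCast_eq_intCast_iff _ _ _).mp hz'
  obtain ⟨c, hc⟩ := Int.ModEq.dvd hmod
  rw [Int.modEq_iff_dvd]
  exact ⟨c, by rw [← hid]; linear_combination ((p : ℤ) ^ s) * hc⟩
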